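/- arXiv:math/9607220 — 5 statements merged into one kernel-verified Lean document; each statement's English description precedes it below -/
import Mathlib

section
/- Let G be a group acting on a set X, and let K be a subgroup of the group of bijections (permutations) of X, with composition as the group operation. Define H = {a ∈ G : every φ ∈ K is affine for a via some b ∈ G}. Then H is a subgroup of G, and moreover for every φ ∈ K and every a ∈ H there exists b ∈ H such that φ is affine for a via b (i.e., K is affine for H via H). -/
/-- Let `G` act on a set `X` and let `K` be a subgroup of the
permutation group of `X` (with composition as the group operation).  The set
`H = {a ∈ G | every φ ∈ K is affine for a via some b ∈ G}` is a subgroup of `G`,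
and moreover `K` is affine for `H` via `H`: for every `φ ∈ K` and `a ∈ H` there
is some `b ∈ H` such that `φ (a • x) = b • φ x` for all `x`. -/
theorem affine_via_subgroup {G X : Type*} [Group G] [MulAction G X]
    (K : Subgroup (Equiv.Perm X)) :
    ∃ H : Subgroup G,
      (∀ a : G, a ∈ H ↔ ∀ φ ∈ K, ∃ b : G, ∀ x : X, φ (a • x) = b • φ x) ∧
      (∀ φ ∈ K, ∀ a ∈ H, ∃ b ∈ H, ∀ x : X, φ (a • x) = b • φ x) := by
  refine ⟨{ carrier := {a : G | ∀ φ ∈ K, ∃ b : G, ∀ x : X, φ (a • x) = b • φ x}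
            one_mem' := by
              intro φ hφ
              exact ⟨1, fun x => by simp⟩
            mul_mem' := by
              intro a₁ a₂ h₁ h₂ φ hφ
              obtain ⟨b₁, hb₁⟩ := h₁ φ hφ
              obtain ⟨b₂, hb₂⟩ := h₂ φ hφ
              exact ⟨b₁ * b₂, fun x => by
                rw [mul_smul, hb₁, hb₂, mul_smul]⟩
            inv_mem' := by
              intro a ha φ hφ
              obtain ⟨b, hb⟩ := ha φ hφ
              refine ⟨b⁻¹, fun x => ?_⟩
              have := hb (a⁻¹ • x)
              rw [smul_inv_smul] at this
              rw [this, inv_smul_smul] }, fun a => Iff.rfl, ?_⟩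
  intro φ hφ a ha
  obtain ⟨b, hb⟩ := ha φ hφ
  refine ⟨b, ?_, hb⟩
  intro ψ hψ
  obtain ⟨c, hc⟩ := ha (ψ * φ) (mul_mem hψ hφ)
  refine ⟨c, fun y => ?_⟩
  have hby : b • y = φ (a • φ.symm y) := by
    rw [hb (φ.symm y), Equiv.apply_symm_apply]
  have := hc (φ.symm y)
  simp only [Equiv.Perm.mul_apply, Equiv.apply_symm_apply] at this
  rw [hby, this]
end

section
/- Let G be a metrizable topological group acting continuously on a metric space X equipped with its Borel σ-algebra and a finite measure μ, such that for each g ∈ G the map x ↦ g • x is measure-preserving. Let A ⊆ G and let B ⊆ G be compact. Let φₙ, φ : X → X be Borel measurable maps such that φₙ → φ in measure (with respect to μ). If for every n and every a ∈ A there exists b ∈ B such that φₙ(a • x) = b • φₙ(x) for μ-almost every x, then for every a ∈ A there exists b ∈ B such that φ(a • x) = b • φ(x) for μ-almost every x. -/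
open MeasureTheory Filter Topology

/-- Let a metrizable topological group `G` act continuously on a
metric space `X` with its Borel σ-algebra and a finite measure `μ`, each translation
being measure-preserving.  Let `A ⊆ G`, let `B ⊆ G` be compact, and let
`φₙ → φ` in measure, all maps Borel measurable.  If each `φₙ` is affine for `A`
via `B` (up to a.e. equality), then so is `φ`. -/
theorem ae_affine_of_tendstoInMeasure {G X : Type*} [Group G] [TopologicalSpace G]
    [IsTopologicalGroup G] [TopologicalSpace.MetrizableSpace G]
    [MetricSpace X] [MeasurableSpace X] [BorelSpace X]
    [MulAction G X] [ContinuousSMul G X]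
    (μ : Measure X) [IsFiniteMeasure μ]
    (hmp : ∀ g : G, MeasurePreserving (fun x : X => g • x) μ μ)
    (A B : Set G) (hB : IsCompact B)
    (φn : ℕ → X → X) (φ : X → X)
    (hφn : ∀ n, Measurable (φn n)) (hφ : Measurable φ)
    (hconv : TendstoInMeasure μ φn atTop φ)
    (haff : ∀ n, ∀ a ∈ A, ∃ b ∈ B, ∀ᵐ x ∂μ, φn n (a • x) = b • φn n x) :
    ∀ a ∈ A, ∃ b ∈ B, ∀ᵐ x ∂μ, φ (a • x) = b • φ x := by
  intro a ha
  choose b hbB hb using fun n => haff n a ha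
  obtain ⟨c, hcB, k, hk, hck⟩ := hB.tendsto_subseq hbB
  have hconv2 : TendstoInMeasure μ (fun j => φn (k j)) atTop φ :=
    fun ε hε => (hconv ε hε).comp hk.tendsto_atTop
  obtain ⟨m, hm, hae⟩ := hconv2.exists_seq_tendsto_ae
  have hbtend : Tendsto (fun j => b (k (m j))) atTop (𝓝 c) :=
    hck.comp hm.tendsto_atTop
  have hae' : ∀ᵐ x ∂μ, Tendsto (fun j => φn (k (m j)) (a • x)) atTop (𝓝 (φ (a • x))) :=
    (hmp a).quasiMeasurePreserving.ae hae
  have haeq : ∀ᵐ x ∂μ, ∀ j, φn (k (m j)) (a • x) = b (k (m j)) • φn (k (m j)) x :=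
    ae_all_iff.2 fun j => hb (k (m j))
  refine ⟨c, hcB, ?_⟩
  filter_upwards [hae, hae', haeq] with x h1 h2 h3
  have h4 : Tendsto (fun j => b (k (m j)) • φn (k (m j)) x) atTop (𝓝 (c • φ x)) :=
    hbtend.smul h1
  have h5 : Tendsto (fun j => φn (k (m j)) (a • x)) atTop (𝓝 (c • φ x)) := by
    simpa only [h3] using h4
  exact tendsto_nhds_unique h2 h5
end

section
/- Let G be a topological group acting continuously on a Polish space X (a separable, completely metrizable metric space) equipped with its Borel σ-algebra and a finite Borel measure μ, such that for each g ∈ G the map x ↦ g • x is measure-preserving. Let Y be a separable metric space and let φ : X → Y be Borel measurable. If aₙ → a in G, then the sequence of functions x ↦ φ(aₙ • x) converges in measure (with respect to μ) to the function x ↦ φ(a • x). -/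
open MeasureTheory Filter
open Set Metric
open scoped ENNReal Topology symmDiff

lemma aux_innerRegularWRT_isCompact_isClosed {X : Type*} [MetricSpace X]
    [TopologicalSpace.SeparableSpace X] [CompleteSpace X] [MeasurableSpace X] [BorelSpace X]
    (μ : Measure X) [IsFiniteMeasure μ] :
    Measure.InnerRegularWRT μ IsCompact IsClosed := by
  intro F hF r hr
  rcases isEmpty_or_nonempty X with hX | hX
  · refine ⟨∅, empty_subset _, isCompact_empty, ?_⟩
    have : F = ∅ := eq_empty_of_isEmpty F
    simpa [this] using hr
  obtain ⟨u, hu⟩ := TopologicalSpace.exists_dense_seq X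
  obtain ⟨r', hr1, hr2⟩ := exists_between hr
  set ε : ℝ≥0∞ := r' - r with hε
  have hεpos : ε ≠ 0 := (tsub_pos_of_lt hr1).ne'
  obtain ⟨δ, hδpos, hδsum⟩ := ENNReal.exists_pos_sum_of_countable' hεpos ℕ
  have key : ∀ n : ℕ, ∃ k : ℕ,
      μ (F \ ⋃ i ∈ Finset.Iic k, closedBall (u i) (1 / (n + 1))) < δ n := by
    intro n
    have hcov : (⋂ k : ℕ, F \ ⋃ i ∈ Finset.Iic k, closedBall (u i) (1 / (n + 1))) = ∅ := by
      ext x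
      simp only [mem_iInter, mem_diff, mem_iUnion, mem_empty_iff_false, iff_false, not_forall,
        not_and, not_not, Finset.mem_Iic, exists_prop]
      obtain ⟨i, hi⟩ : ∃ i, dist x (u i) < 1 / (n + 1) := by
        have hpos : (0 : ℝ) < 1 / (n + 1) := by positivity
        rcases Metric.dense_iff.1 hu x _ hpos with ⟨y, hyb, j, rfl⟩
        exact ⟨j, by simpa [dist_comm] using Metric.mem_ball.1 hyb⟩
      exact ⟨i, fun _ => ⟨i, le_refl i, Metric.mem_closedBall.2 hi.le⟩⟩
    have hmono : Antitone fun k : ℕ =>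
        F \ ⋃ i ∈ Finset.Iic k, closedBall (u i) (1 / (n + 1)) := by
      intro k l hkl
      refine diff_subset_diff_right (iUnion₂_subset fun i hi => ?_)
      exact subset_iUnion₂ (s := fun i (_ : i ∈ Finset.Iic l) => closedBall (u i) (1 / (n + 1)))
        i (Finset.mem_Iic.2 ((Finset.mem_Iic.1 hi).trans hkl))
    have hmeas : ∀ k : ℕ, NullMeasurableSet
        (F \ ⋃ i ∈ Finset.Iic k, closedBall (u i) (1 / (n + 1))) μ := fun k =>
      (hF.measurableSet.diff
        (MeasurableSet.biUnion (Finset.Iic k).countable_toSet fun i _ =>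
          measurableSet_closedBall)).nullMeasurableSet
    have htend := tendsto_measure_iInter_atTop hmeas hmono ⟨0, measure_ne_top μ _⟩
    rw [hcov] at htend
    simp only [measure_empty] at htend
    exact (htend.eventually_lt_const (hδpos n)).exists
  choose k hk using key
  set B : ℕ → Set X := fun n => ⋃ i ∈ Finset.Iic (k n), closedBall (u i) (1 / (n + 1)) with hB
  set K : Set X := F ∩ ⋂ n, B n with hKdef
  have hKF : K ⊆ F := inter_subset_left
  have hKclosed : IsClosed K :=
    hF.inter (isClosed_iInter fun n =>
      (Finset.Iic (k n)).finite_toSet.isClosed_biUnion fun i _ => Metric.isClosed_closedBall)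
  have hKtb : TotallyBounded K := by
    rw [Metric.totallyBounded_iff]
    intro e he
    obtain ⟨n, hn⟩ := exists_nat_one_div_lt he
    refine ⟨u '' (Finset.Iic (k n) : Set ℕ), ((Finset.Iic (k n)).finite_toSet.image u), ?_⟩
    intro x hx
    have hxB : x ∈ B n := (mem_iInter.1 hx.2) n
    simp only [hB, mem_iUnion, exists_prop] at hxB
    obtain ⟨i, hi, hxi⟩ := hxB
    simp only [mem_iUnion, exists_prop]
    refine ⟨u i, mem_image_of_mem u hi, ?_⟩
    exact lt_of_le_of_lt (Metric.mem_closedBall.1 hxi) hn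
  have hKcomp : IsCompact K := TotallyBounded.isCompact_of_isClosed hKtb hKclosed
  refine ⟨K, hKF, hKcomp, ?_⟩
  have hdiff : μ (F \ K) ≤ ε := by
    have : F \ K ⊆ ⋃ n, F \ B n := by
      intro x hx
      rcases hx with ⟨hxF, hxK⟩
      simp only [hKdef, mem_inter_iff, mem_iInter, not_and, not_forall] at hxK
      obtain ⟨n, hn⟩ := hxK hxF
      exact mem_iUnion.2 ⟨n, hxF, hn⟩
    calc μ (F \ K) ≤ μ (⋃ n, F \ B n) := measure_mono this
      _ ≤ ∑' n, μ (F \ B n) := measure_iUnion_le _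
      _ ≤ ∑' n, δ n := ENNReal.tsum_le_tsum fun n => (hk n).le
      _ ≤ ε := hδsum.le
  by_contra hcon
  push_neg at hcon
  have h1 : μ F ≤ μ K + μ (F \ K) := by
    calc μ F = μ (K ∪ (F \ K)) := by rw [union_diff_cancel hKF]
      _ ≤ μ K + μ (F \ K) := measure_union_le _ _
  have h2 : μ F ≤ r + ε := h1.trans (add_le_add hcon hdiff)
  rw [hε, add_tsub_cancel_of_le hr1.le] at h2
  exact absurd (h2.trans_lt hr2) (lt_irrefl _)

/-- Let a topological group `G` act continuously on a Polish
space `X` (separable and completely metrizable) with its Borel σ-algebra and a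
finite Borel measure `μ`, each translation being measure-preserving.  Let `Y` be
a separable metric space and `φ : X → Y` Borel measurable.  If `aₙ → a` in `G`,
then `x ↦ φ (aₙ • x)` converges in measure to `x ↦ φ (a • x)`. -/
theorem tendstoInMeasure_comp_smul {G X Y : Type*} [Group G] [TopologicalSpace G]
    [IsTopologicalGroup G]
    [MetricSpace X] [TopologicalSpace.SeparableSpace X] [CompleteSpace X]
    [MeasurableSpace X] [BorelSpace X]
    [MulAction G X] [ContinuousSMul G X]
    (μ : Measure X) [IsFiniteMeasure μ]
    (hmp : ∀ g : G, MeasurePreserving (fun x : X => g • x) μ μ)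
    [MetricSpace Y] [TopologicalSpace.SeparableSpace Y]
    [MeasurableSpace Y] [BorelSpace Y]
    (φ : X → Y) (hφ : Measurable φ)
    (an : ℕ → G) (a : G) (ha : Tendsto an atTop (nhds a)) :
    TendstoInMeasure μ (fun n x => φ (an n • x)) atTop (fun x => φ (a • x)) := by
  haveI : μ.InnerRegular := by
    refine ⟨fun U hU r hr => ?_⟩
    exact ((aux_innerRegularWRT_isCompact_isClosed μ).trans
      Measure.WeaklyRegular.innerRegular_measurable) ⟨hU, measure_ne_top μ U⟩ r hr
  -- the translation maps as continuous maps, continuously depending on the group element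
  set T : C(G, C(X, X)) :=
    ContinuousMap.curry (ContinuousMap.mk (fun p : G × X => p.1 • p.2) continuous_smul) with hT
  have hTcoe : ∀ g : G, ⇑(T g) = fun x => g • x := fun g => rfl
  have hTmp : ∀ g : G, MeasurePreserving (T g) μ μ := fun g => (hTcoe g) ▸ hmp g
  have hTt : Tendsto (fun n => T (an n)) atTop (𝓝 (T a)) := (T.continuous.tendsto a).comp ha
  -- Step A: symmetric differences of preimages of a measurable set tend to zero
  have stepA : ∀ s : Set X, MeasurableSet s →
      Tendsto (fun n => μ (((fun x => an n • x) ⁻¹' s) ∆ ((fun x => a • x) ⁻¹' s)))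
        atTop (𝓝 0) := by
    intro s hs
    have := tendsto_measure_symmDiff_preimage_nhds_zero (μ := μ) (ν := μ) hTt
      (.of_forall fun n => hTmp (an n)) (hTmp a) hs.nullMeasurableSet (measure_ne_top μ s)
    simpa only [hTcoe] using this
  -- Step B: the simple-function case
  have stepB : ∀ ψ : SimpleFunc X Y,
      Tendsto (fun n => μ {x | ψ (an n • x) ≠ ψ (a • x)}) atTop (𝓝 0) := by
    intro ψ
    have hsub : ∀ n, {x | ψ (an n • x) ≠ ψ (a • x)} ⊆
        ⋃ y ∈ ψ.range, ((fun x => an n • x) ⁻¹' (ψ ⁻¹' {y})) ∆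
          ((fun x => a • x) ⁻¹' (ψ ⁻¹' {y})) := by
      intro n x hx
      refine mem_biUnion (ψ.mem_range_self (a • x)) ?_
      rw [Set.mem_symmDiff]
      right
      exact ⟨rfl, fun h => hx h⟩
    have hsum : Tendsto (fun n => ∑ y ∈ ψ.range,
        μ (((fun x => an n • x) ⁻¹' (ψ ⁻¹' {y})) ∆ ((fun x => a • x) ⁻¹' (ψ ⁻¹' {y}))))
        atTop (𝓝 0) := by
      have := tendsto_finset_sum ψ.range
        (fun y _ => stepA (ψ ⁻¹' {y}) (ψ.measurableSet_preimage {y}))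
      simpa using this
    refine tendsto_of_tendsto_of_tendsto_of_le_of_le' tendsto_const_nhds hsum
      (.of_forall fun n => zero_le) (.of_forall fun n => ?_)
    exact (measure_mono (hsub n)).trans (measure_biUnion_finset_le _ _)
  -- Step C: general case via simple approximation
  rw [tendstoInMeasure_iff_dist]
  rcases isEmpty_or_nonempty X with hX | hX
  · intro ε hε
    have : ∀ n, μ {x | ε ≤ dist (φ (an n • x)) (φ (a • x))} = 0 := by
      intro n
      rw [eq_empty_of_isEmpty {x | ε ≤ dist (φ (an n • x)) (φ (a • x))}]
      exact measure_empty
    simpa [this] using tendsto_const_nhds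
  have hY : Nonempty Y := ⟨φ (Classical.arbitrary X)⟩
  obtain ⟨y₀⟩ := hY
  set ψ : ℕ → SimpleFunc X Y := fun k => SimpleFunc.approxOn φ hφ univ y₀ (mem_univ y₀) k
    with hψ
  have hψt : ∀ x, Tendsto (fun k => ψ k x) atTop (𝓝 (φ x)) := fun x =>
    SimpleFunc.tendsto_approxOn hφ (mem_univ y₀) (by simp)
  haveI : SecondCountableTopology Y := UniformSpace.secondCountable_of_separable Y
  have hψm : TendstoInMeasure μ (fun k x => ψ k x) atTop φ :=
    tendstoInMeasure_of_tendsto_ae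
      (fun k => (ψ k).stronglyMeasurable.aestronglyMeasurable)
      (Eventually.of_forall hψt)
  intro ε hε
  rw [ENNReal.tendsto_nhds_zero]
  intro δ hδ
  have h3 : (0:ℝ≥0∞) < δ / 3 := ENNReal.div_pos hδ.ne' (by norm_num)
  have hε3 : (0:ℝ) < ε / 3 := by linarith
  obtain ⟨k, hkD⟩ : ∃ k, μ {x | ε / 3 ≤ dist (ψ k x) (φ x)} ≤ δ / 3 := by
    have := ENNReal.tendsto_nhds_zero.mp (tendstoInMeasure_iff_dist.1 hψm (ε / 3) hε3) (δ / 3) h3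
    exact this.exists
  set D : Set X := {x | ε / 3 ≤ dist (ψ k x) (φ x)} with hD
  have hDm : MeasurableSet D :=
    measurableSet_le measurable_const ((ψ k).measurable.dist hφ)
  filter_upwards [ENNReal.tendsto_nhds_zero.mp (stepB (ψ k)) (δ / 3) h3] with n hn
  have hsub : {x | ε ≤ dist (φ (an n • x)) (φ (a • x))} ⊆
      ((fun x => an n • x) ⁻¹' D) ∪ {x | ψ k (an n • x) ≠ ψ k (a • x)} ∪
        ((fun x => a • x) ⁻¹' D) := by
    intro x hx
    by_contra hcon
    simp only [mem_union, not_or, mem_preimage, mem_setOf_eq, hD, not_le, not_not] at hcon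
    obtain ⟨⟨h1, h2⟩, h3'⟩ := hcon
    have hx' : ε ≤ dist (φ (an n • x)) (φ (a • x)) := hx
    have htri : dist (φ (an n • x)) (φ (a • x)) ≤
        dist (φ (an n • x)) (ψ k (an n • x)) + dist (ψ k (an n • x)) (ψ k (a • x)) +
          dist (ψ k (a • x)) (φ (a • x)) := dist_triangle4 _ _ _ _
    have hmid : dist (ψ k (an n • x)) (ψ k (a • x)) = 0 := by rw [h2, dist_self]
    have h1' : dist (φ (an n • x)) (ψ k (an n • x)) < ε / 3 := by rw [dist_comm]; exact h1
    linarith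
  calc μ {x | ε ≤ dist (φ (an n • x)) (φ (a • x))}
      ≤ μ (((fun x => an n • x) ⁻¹' D) ∪ {x | ψ k (an n • x) ≠ ψ k (a • x)} ∪
          ((fun x => a • x) ⁻¹' D)) := measure_mono hsub
    _ ≤ μ ((fun x => an n • x) ⁻¹' D) + μ {x | ψ k (an n • x) ≠ ψ k (a • x)} +
          μ ((fun x => a • x) ⁻¹' D) :=
        (measure_union_le _ _).trans (add_le_add_left (measure_union_le _ _) _)
    _ ≤ δ / 3 + δ / 3 + δ / 3 := by
        refine add_le_add (add_le_add ?_ hn) ?_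
        · rw [(hmp (an n)).measure_preimage hDm.nullMeasurableSet]; exact hkD
        · rw [(hmp a).measure_preimage hDm.nullMeasurableSet]; exact hkD
    _ = δ := ENNReal.add_thirds δ
end

section
/- Let G be a topological group acting continuously on a Polish space X (a separable, completely metrizable metric space) equipped with its Borel σ-algebra and a finite Borel measure μ, such that for each g ∈ G the map x ↦ g • x is measure-preserving. Let φ : X → X be Borel measurable. Suppose aₙ → a in G, bₙ → b in G, and for each n, φ(aₙ • x) = bₙ • φ(x) for μ-almost every x. Then φ(a • x) = b • φ(x) for μ-almost every x. -/
open MeasureTheory Filter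


open MeasureTheory Filter Set Topology TopologicalSpace
open scoped ENNReal symmDiff

section Tight

variable {X : Type*} [MetricSpace X] [TopologicalSpace.SeparableSpace X] [CompleteSpace X]
  [MeasurableSpace X] [BorelSpace X]

/-- Tightness of finite measures on Polish spaces. -/
lemma my_exists_isCompact_compl_lt (μ : Measure X) [IsFiniteMeasure μ]
    {ε : ℝ≥0∞} (hε : ε ≠ 0) : ∃ K : Set X, IsCompact K ∧ μ Kᶜ < ε := by
  rcases isEmpty_or_nonempty X with h | h
  · refine ⟨∅, isCompact_empty, ?_⟩
    rw [Set.eq_empty_of_isEmpty (∅ᶜ : Set X)]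
    simpa [pos_iff_ne_zero] using hε
  obtain ⟨δ, hδpos, hδsum⟩ := ENNReal.exists_pos_sum_of_countable hε ℕ
  set u : ℕ → X := TopologicalSpace.denseSeq X with hu
  have hdense := TopologicalSpace.denseRange_denseSeq X
  -- for each k, a finite union of closed balls of radius 1/(k+1) of almost full measure
  have key : ∀ k : ℕ, ∃ N : ℕ,
      μ (Set.accumulate (fun n => Metric.closedBall (u n) (1 / (k + 1))) N)ᶜ < δ k := by
    intro k
    have hcov : (⋃ n, Metric.closedBall (u n) (1 / (k + 1))) = univ := by
      ext x
      simp only [mem_iUnion, mem_univ, iff_true, Metric.mem_closedBall]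
      have hx : x ∈ closure (Set.range u) := by rw [hdense.closure_eq]; trivial
      rcases Metric.mem_closure_iff.1 hx (1 / (k + 1)) (by positivity) with ⟨y, ⟨n, rfl⟩, hy⟩
      exact ⟨n, hy.le⟩
    have hmono := tendsto_measure_iUnion_accumulate
      (μ := μ) (f := fun n => Metric.closedBall (u n) (1 / (k + 1)))
    rw [hcov] at hmono
    have hmeas : ∀ N, MeasurableSet
        (Set.accumulate (fun n => Metric.closedBall (u n) (1 / (k + 1))) N) := by
      intro N
      rw [Set.accumulate_def]
      exact MeasurableSet.biUnion (Set.to_countable _)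
        fun n _ => measurableSet_closedBall
    have hcompl : Tendsto
        (fun N => μ (Set.accumulate (fun n => Metric.closedBall (u n) (1 / (k + 1))) N)ᶜ)
        atTop (𝓝 0) := by
      have : Tendsto
          (fun N => μ univ - μ (Set.accumulate (fun n => Metric.closedBall (u n) (1 / (k + 1))) N))
          atTop (𝓝 (μ univ - μ univ)) :=
        ENNReal.Tendsto.sub tendsto_const_nhds hmono (Or.inl (measure_ne_top μ _))
      rw [tsub_self] at this
      refine this.congr fun N => ?_
      rw [measure_compl (hmeas N) (measure_ne_top μ _)]
    exact (hcompl.eventually_lt_const (show (0:ℝ≥0∞) < δ k by exact_mod_cast hδpos k)).exists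
  choose N hN using key
  set s : ℕ → Set X :=
    fun k => Set.accumulate (fun n => Metric.closedBall (u n) (1 / (k + 1))) (N k) with hs
  refine ⟨⋂ k, s k, ?_, ?_⟩
  · refine TotallyBounded.isCompact_of_isClosed ?_ ?_
    · rw [Metric.totallyBounded_iff]
      intro r hr
      obtain ⟨k, hk⟩ := exists_nat_one_div_lt hr
      refine ⟨u '' Set.Iic (N k), (Set.finite_Iic _).image _, ?_⟩
      intro x hx
      have hx' : x ∈ s k := Set.mem_iInter.1 hx k
      simp only [hs, Set.accumulate_def, Set.mem_iUnion] at hx'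
      obtain ⟨n, hn, hxn⟩ := hx'
      refine Set.mem_biUnion ⟨n, hn, rfl⟩ ?_
      exact lt_of_le_of_lt (Metric.mem_closedBall.1 hxn) hk
    · refine isClosed_iInter fun k => ?_
      simp only [hs, Set.accumulate_def]
      exact Set.Finite.isClosed_biUnion (Set.finite_Iic _)
        fun n _ => Metric.isClosed_closedBall
  · rw [Set.compl_iInter]
    calc μ (⋃ k, (s k)ᶜ) ≤ ∑' k, μ (s k)ᶜ := measure_iUnion_le _
    _ ≤ ∑' k, (δ k : ℝ≥0∞) := ENNReal.tsum_le_tsum fun k => (hN k).le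
    _ < ε := hδsum

lemma my_innerRegular (μ : Measure X) [IsFiniteMeasure μ] :
    μ.InnerRegularCompactLTTop := by
  constructor
  rintro A ⟨hA, -⟩ r hr
  obtain ⟨F, hFA, hFc, hF⟩ := hA.exists_lt_isClosed_of_ne_top (measure_ne_top μ A) hr
  have hη : μ F - r ≠ 0 := by
    simpa [tsub_eq_zero_iff_le, not_le] using hF
  obtain ⟨K, hK, hKc⟩ := my_exists_isCompact_compl_lt μ hη
  refine ⟨F ∩ K, (Set.inter_subset_left).trans hFA, hK.inter_left hFc, ?_⟩
  by_contra h
  push_neg at h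
  have h1 : μ F ≤ μ (F ∩ K) + μ Kᶜ := by
    refine (measure_mono ?_).trans (measure_union_le _ _)
    intro x hx
    by_cases hxK : x ∈ K
    · exact Or.inl ⟨hx, hxK⟩
    · exact Or.inr hxK
  have hrne : r ≠ ∞ := (hr.trans_le (le_top.trans_eq (by simp))).ne
  have h2 : μ F < r + (μ F - r) := by
    calc μ F ≤ μ (F ∩ K) + μ Kᶜ := h1
    _ ≤ r + μ Kᶜ := by gcongr
    _ < r + (μ F - r) := by
      exact ENNReal.add_lt_add_left hrne hKc
  rw [add_comm, tsub_add_cancel_of_le hF.le] at h2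
  exact absurd h2 (lt_irrefl _)

end Tight

section Main

variable {G X : Type*} [Group G] [TopologicalSpace G] [IsTopologicalGroup G]
  [MetricSpace X] [TopologicalSpace.SeparableSpace X] [CompleteSpace X]
  [MeasurableSpace X] [BorelSpace X]
  [MulAction G X] [ContinuousSMul G X]
  (μ : Measure X) [IsFiniteMeasure μ]

/-- The map `g ↦ (g • ·)` as a continuous map into `C(X, X)`. -/
noncomputable def smulCM (g : G) : C(X, X) := ⟨fun x => g • x, continuous_const_smul g⟩

lemma continuous_smulCM : Continuous (smulCM : G → C(X, X)) :=
  ContinuousMap.continuous_of_continuous_uncurry _ continuous_smul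

/-- Lemma A: continuity in measure of set translations. -/
lemma lemA (hmp : ∀ g : G, MeasurePreserving (fun x : X => g • x) μ μ)
    (cn : ℕ → G) (hc : Tendsto cn atTop (𝓝 1)) {S : Set X} (hS : MeasurableSet S) :
    Tendsto (fun n => μ (((fun x => cn n • x) ⁻¹' S) ∆ S)) atTop (𝓝 0) := by
  have : μ.InnerRegularCompactLTTop := my_innerRegular μ
  have h1 : Tendsto (fun n => (smulCM (cn n) : C(X, X))) atTop (𝓝 (smulCM (1 : G))) :=
    (continuous_smulCM.tendsto 1).comp hc
  have h2 := tendsto_measure_symmDiff_preimage_nhds_zero (μ := μ) (ν := μ)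
    h1 (Eventually.of_forall fun n => hmp (cn n)) (hmp 1)
    hS.nullMeasurableSet (measure_ne_top μ S)
  have hid : ((smulCM (1 : G) : C(X, X)) : X → X) ⁻¹' S = S := by
    ext x; simp [smulCM]
  simp [hid] at h2
  exact h2

/-- Lemma B: simple functions move continuously under translations. -/
lemma lemB (hmp : ∀ g : G, MeasurePreserving (fun x : X => g • x) μ μ)
    (cn : ℕ → G) (hc : Tendsto cn atTop (𝓝 1)) (ψ : SimpleFunc X X) :
    Tendsto (fun n => μ {x | ψ (cn n • x) ≠ ψ x}) atTop (𝓝 0) := by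
  have key : ∀ n, μ {x | ψ (cn n • x) ≠ ψ x} ≤
      ∑ v ∈ ψ.range, μ (((fun x => cn n • x) ⁻¹' (ψ ⁻¹' {v})) ∆ (ψ ⁻¹' {v})) := by
    intro n
    refine le_trans (measure_mono ?_) (measure_biUnion_finset_le _ _)
    intro x hx
    refine Set.mem_biUnion (SimpleFunc.mem_range_self ψ x) ?_
    rw [Set.mem_symmDiff]
    right
    exact ⟨rfl, fun hmem => hx (by simpa using hmem)⟩
  have hsum : Tendsto
      (fun n => ∑ v ∈ ψ.range, μ (((fun x => cn n • x) ⁻¹' (ψ ⁻¹' {v})) ∆ (ψ ⁻¹' {v})))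
      atTop (𝓝 0) := by
    have := tendsto_finset_sum (ψ.range)
      (fun v _ => lemA μ hmp cn hc (ψ.measurableSet_fiber v))
    simpa using this
  exact tendsto_of_tendsto_of_tendsto_of_le_of_le tendsto_const_nhds hsum
    (fun n => zero_le) key

/-- Lemma C: `φ (cₙ • x) → φ x` in measure when `cₙ → 1`. -/
lemma lemC [Nonempty X] (hmp : ∀ g : G, MeasurePreserving (fun x : X => g • x) μ μ)
    (φ : X → X) (hφ : Measurable φ)
    (cn : ℕ → G) (hc : Tendsto cn atTop (𝓝 1)) :
    TendstoInMeasure μ (fun n x => φ (cn n • x)) atTop φ := by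
  haveI : SecondCountableTopology X := UniformSpace.secondCountable_of_separable X
  set y₀ : X := Classical.arbitrary X
  set ψ : ℕ → SimpleFunc X X := SimpleFunc.approxOn φ hφ Set.univ y₀ (Set.mem_univ _) with hψ
  have hψtendsto : ∀ x, Tendsto (fun k => ψ k x) atTop (𝓝 (φ x)) := fun x =>
    SimpleFunc.tendsto_approxOn hφ (Set.mem_univ _) (by simp)
  have hψm : TendstoInMeasure μ (fun k x => ψ k x) atTop φ :=
    tendstoInMeasure_of_tendsto_ae (fun k => (ψ k).aestronglyMeasurable)
      (Filter.Eventually.of_forall hψtendsto)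
  rw [tendstoInMeasure_iff_dist]
  intro ε hε
  rw [ENNReal.tendsto_atTop_zero]
  intro δ hδ
  -- choose a good simple approximation
  obtain ⟨k, hk⟩ : ∃ k, μ {x | ε / 3 ≤ dist (ψ k x) (φ x)} ≤ δ / 3 := by
    obtain ⟨k0, hk0⟩ := (ENNReal.tendsto_atTop_zero.1 (tendstoInMeasure_iff_dist.1 hψm (ε / 3) (by positivity)))
      (δ / 3) (ENNReal.div_pos hδ.ne' (by norm_num))
    exact ⟨k0, hk0 k0 le_rfl⟩
  -- eventually the simple function barely moves
  obtain ⟨N, hN⟩ := (ENNReal.tendsto_atTop_zero.1 (lemB μ hmp cn hc (ψ k)))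
    (δ / 3) (ENNReal.div_pos hδ.ne' (by norm_num))
  refine ⟨N, fun n hn => ?_⟩
  have hsub : {x | ε ≤ dist (φ (cn n • x)) (φ x)} ⊆
      {x | ε / 3 ≤ dist (ψ k (cn n • x)) (φ (cn n • x))} ∪
      ({x | ψ k (cn n • x) ≠ ψ k x} ∪ {x | ε / 3 ≤ dist (ψ k x) (φ x)}) := by
    intro x hx
    by_contra hmem
    simp only [Set.mem_union, Set.mem_setOf_eq, not_or, not_le, not_not] at hmem
    obtain ⟨h1, h2, h3⟩ := hmem
    simp only [Set.mem_setOf_eq] at hx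
    have hmid : dist ((ψ k) (cn n • x)) ((ψ k) x) = 0 := by rw [h2, dist_self]
    have htri := dist_triangle4 (φ (cn n • x)) (ψ k (cn n • x)) (ψ k x) (φ x)
    rw [dist_comm] at h1
    linarith [hx, htri, hmid, h1, h3]
  have hA1 : μ {x | ε / 3 ≤ dist (ψ k (cn n • x)) (φ (cn n • x))} =
      μ {y | ε / 3 ≤ dist (ψ k y) (φ y)} := by
    have hE : MeasurableSet {y | ε / 3 ≤ dist (ψ k y) (φ y)} :=
      measurableSet_le measurable_const ((ψ k).measurable.dist hφ)
    exact (hmp (cn n)).measure_preimage hE.nullMeasurableSet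
  calc μ {x | ε ≤ dist (φ (cn n • x)) (φ x)}
      ≤ μ ({x | ε / 3 ≤ dist (ψ k (cn n • x)) (φ (cn n • x))}) +
        (μ {x | ψ k (cn n • x) ≠ ψ k x} + μ {x | ε / 3 ≤ dist (ψ k x) (φ x)}) :=
        (measure_mono hsub).trans ((measure_union_le _ _).trans
          (by gcongr; exact measure_union_le _ _))
    _ ≤ δ / 3 + (δ / 3 + δ / 3) := by
        refine add_le_add ?_ (add_le_add ?_ ?_)
        · rw [hA1]; exact hk
        · exact hN n hn
        · exact hk
    _ = δ := by rw [← add_assoc, ENNReal.add_thirds]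

/-- Uniqueness of limits in measure. -/
lemma lemU (f : ℕ → X → X) (g h : X → X)
    (hg : TendstoInMeasure μ f atTop g) (hh : TendstoInMeasure μ f atTop h) :
    g =ᵐ[μ] h := by
  have key : ∀ k : ℕ, μ {x | 1 / (k + 1 : ℝ) ≤ dist (g x) (h x)} = 0 := by
    intro k
    set ε : ℝ := 1 / (k + 1) with hε
    have hεpos : 0 < ε := by positivity
    have hle : ∀ n, μ {x | ε ≤ dist (g x) (h x)} ≤
        μ {x | ε / 2 ≤ dist (f n x) (g x)} + μ {x | ε / 2 ≤ dist (f n x) (h x)} := by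
      intro n
      refine le_trans (measure_mono ?_) (measure_union_le _ _)
      intro x hx
      by_contra hmem
      simp only [Set.mem_union, Set.mem_setOf_eq, not_or, not_le] at hmem
      obtain ⟨h1, h2⟩ := hmem
      simp only [Set.mem_setOf_eq] at hx
      have := dist_triangle_left (g x) (h x) (f n x)
      linarith
    have hlim : Tendsto (fun n => μ {x | ε / 2 ≤ dist (f n x) (g x)} +
        μ {x | ε / 2 ≤ dist (f n x) (h x)}) atTop (𝓝 0) := by
      have := (tendstoInMeasure_iff_dist.1 hg (ε / 2) (by positivity)).add (tendstoInMeasure_iff_dist.1 hh (ε / 2) (by positivity))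
      simpa using this
    exact le_antisymm (ge_of_tendsto' hlim hle) zero_le
  have hae : ∀ᵐ x ∂μ, ∀ k : ℕ, dist (g x) (h x) < 1 / (k + 1 : ℝ) := by
    rw [MeasureTheory.ae_all_iff]
    intro k
    rw [ae_iff]
    simpa [not_lt] using key k
  filter_upwards [hae] with x hx
  have : dist (g x) (h x) ≤ 0 :=
    ge_of_tendsto' tendsto_one_div_add_atTop_nhds_zero_nat (fun k => (hx k).le)
  exact dist_le_zero.1 this

end Main


/-- Let a topological group `G` act continuously on a Polish
space `X` with its Borel σ-algebra and a finite Borel measure `μ`, each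
translation being measure-preserving.  Let `φ : X → X` be Borel measurable.
If `aₙ → a`, `bₙ → b` in `G`, and for each `n` we have `φ (aₙ • x) = bₙ • φ x`
for a.e. `x`, then `φ (a • x) = b • φ x` for a.e. `x`. -/
theorem ae_affine_of_tendsto_group {G X : Type*} [Group G] [TopologicalSpace G]
    [IsTopologicalGroup G]
    [MetricSpace X] [TopologicalSpace.SeparableSpace X] [CompleteSpace X]
    [MeasurableSpace X] [BorelSpace X]
    [MulAction G X] [ContinuousSMul G X]
    (μ : Measure X) [IsFiniteMeasure μ]
    (hmp : ∀ g : G, MeasurePreserving (fun x : X => g • x) μ μ)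
    (φ : X → X) (hφ : Measurable φ)
    (an : ℕ → G) (a : G) (ha : Tendsto an atTop (nhds a))
    (bn : ℕ → G) (b : G) (hb : Tendsto bn atTop (nhds b))
    (haff : ∀ n, ∀ᵐ x ∂μ, φ (an n • x) = bn n • φ x) :
    ∀ᵐ x ∂μ, φ (a • x) = b • φ x := by
  rcases isEmpty_or_nonempty X with hX | hX
  · filter_upwards with x
    exact isEmptyElim x
  haveI : SecondCountableTopology X := UniformSpace.secondCountable_of_separable X
  set cn : ℕ → G := fun n => an n * a⁻¹ with hcn
  have hc : Tendsto cn atTop (𝓝 1) := by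
    have := ha.mul_const a⁻¹
    rwa [mul_inv_cancel] at this
  -- convergence in measure to `φ (a • x)`
  have h1 : TendstoInMeasure μ (fun n x => φ (an n • x)) atTop (fun x => φ (a • x)) := by
    rw [tendstoInMeasure_iff_dist]
    intro ε hε
    have key : ∀ n, μ {x | ε ≤ dist (φ (an n • x)) (φ (a • x))} =
        μ {y | ε ≤ dist (φ (cn n • y)) (φ y)} := by
      intro n
      have hset : {x | ε ≤ dist (φ (an n • x)) (φ (a • x))} =
          (fun x => a • x) ⁻¹' {y | ε ≤ dist (φ (cn n • y)) (φ y)} := by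
        ext x
        simp only [Set.mem_setOf_eq, Set.mem_preimage, hcn, smul_smul, inv_mul_cancel_right]
      have hE : MeasurableSet {y | ε ≤ dist (φ (cn n • y)) (φ y)} :=
        measurableSet_le measurable_const
          ((hφ.comp ((continuous_const_smul (cn n)).measurable)).dist hφ)
      rw [hset]
      exact (hmp a).measure_preimage hE.nullMeasurableSet
    simp only [key]
    exact tendstoInMeasure_iff_dist.1 (lemC μ hmp φ hφ cn hc) ε hε
  -- convergence in measure to `b • φ x`
  have h2 : TendstoInMeasure μ (fun n x => φ (an n • x)) atTop (fun x => b • φ x) := by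
    have hpt : ∀ x, Tendsto (fun n => bn n • φ x) atTop (𝓝 (b • φ x)) :=
      fun x => hb.smul tendsto_const_nhds
    have hbase : TendstoInMeasure μ (fun n x => bn n • φ x) atTop (fun x => b • φ x) :=
      tendstoInMeasure_of_tendsto_ae
        (fun n => (((continuous_const_smul (bn n)).measurable).comp hφ).aestronglyMeasurable)
        (Filter.Eventually.of_forall hpt)
    exact TendstoInMeasure.congr_left (fun n => (haff n).mono fun x hx => hx.symm) hbase
  exact lemU μ _ _ _ h1 h2
end

section
/- Let G be a group and Γ a subgroup of G whose normal core is trivial (Γ contains no nontrivial normal subgroup of G). Let φ : G⧸Γ → G⧸Γ be a bijection of the space of left cosets such that: (i) for every a ∈ G there exists b ∈ G with φ(a • x) = b • φ(x) for all x ∈ G⧸Γ, and (ii) for every b ∈ G there exists a ∈ G with φ⁻¹(b • y) = a • φ⁻¹(y) for all y ∈ G⧸Γ. Then there exist an automorphism σ of G and an element c ∈ G such that φ(gΓ) = (σ(g)c)Γ for every g ∈ G; in particular c⁻¹σ(Γ)c = Γ. -/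
private theorem aux_faithful {G : Type*} [Group G] (Γ : Subgroup G)
    (hcore : Γ.normalCore = ⊥) {b b' : G} (h : ∀ y : G ⧸ Γ, b • y = b' • y) :
    b = b' := by
  have : b'⁻¹ * b ∈ Γ.normalCore := by
    rw [Subgroup.normalCore_eq_ker]
    ext y
    simp [MulAction.toPermHom, mul_smul, h y]
  rw [hcore, Subgroup.mem_bot] at this
  exact (inv_mul_eq_one.mp this).symm

/-- Let `Γ` be a subgroup of `G` with trivial normal core and let
`φ` be a bijection of `G⧸Γ` such that `φ` is affine for every `a ∈ G` (via some
`b ∈ G`) and `φ⁻¹` is affine for every `b ∈ G` (via some `a ∈ G`).  Then there are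
an automorphism `σ` of `G` and `c ∈ G` with `φ (gΓ) = (σ g * c)Γ` for all `g`;
in particular `c⁻¹ σ(Γ) c = Γ`. -/
theorem affine_bijection_eq_automorphism {G : Type*} [Group G] (Γ : Subgroup G)
    (hcore : Γ.normalCore = ⊥)
    (φ : (G ⧸ Γ) ≃ (G ⧸ Γ))
    (haff : ∀ a : G, ∃ b : G, ∀ x : G ⧸ Γ, φ (a • x) = b • φ x)
    (haff' : ∀ b : G, ∃ a : G, ∀ y : G ⧸ Γ, φ.symm (b • y) = a • φ.symm y) :
    ∃ (σ : G ≃* G) (c : G),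
      (∀ g : G, φ (g : G ⧸ Γ) = ((σ g * c : G) : G ⧸ Γ)) ∧
      (fun x : G => c⁻¹ * x * c) '' (⇑σ '' (Γ : Set G)) = (Γ : Set G) := by
  classical
  set f : G → G := fun a => Classical.choose (haff a) with hf
  have hfspec : ∀ a : G, ∀ x : G ⧸ Γ, φ (a • x) = f a • φ x :=
    fun a => Classical.choose_spec (haff a)
  have hfspec' : ∀ a : G, ∀ y : G ⧸ Γ, φ (a • φ.symm y) = f a • y := by
    intro a y; rw [hfspec a, Equiv.apply_symm_apply]
  have hmul : ∀ a₁ a₂ : G, f (a₁ * a₂) = f a₁ * f a₂ := by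
    intro a₁ a₂
    refine aux_faithful Γ hcore fun y => ?_
    rw [← hfspec' (a₁ * a₂) y, mul_smul, hfspec a₁, hfspec' a₂, mul_smul]
  have hinj : Function.Injective f := by
    intro a₁ a₂ h
    refine aux_faithful Γ hcore fun y => φ.injective ?_
    rw [hfspec a₁, hfspec a₂, h]
  have hsurj : Function.Surjective f := by
    intro b
    obtain ⟨a, ha⟩ := haff' b
    refine ⟨a, aux_faithful Γ hcore fun y => ?_⟩
    rw [← hfspec' a y, ← ha, Equiv.apply_symm_apply]
  let σ : G ≃* G := MulEquiv.ofBijective (MonoidHom.mk' f hmul) ⟨hinj, hsurj⟩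
  set c : G := (φ ((1 : G) : G ⧸ Γ)).out with hc
  have hcq : ((c : G) : G ⧸ Γ) = φ ((1 : G) : G ⧸ Γ) := QuotientGroup.out_eq' _
  have key : ∀ g : G, φ (g : G ⧸ Γ) = ((σ g * c : G) : G ⧸ Γ) := by
    intro g
    have h1 : ((g : G) : G ⧸ Γ) = g • ((1 : G) : G ⧸ Γ) := by
      simp [QuotientGroup.mk_mul]
    rw [h1, hfspec g, ← hcq]
    show f g • ((c : G) : G ⧸ Γ) = _
    simp [QuotientGroup.mk_mul]
    rfl
  refine ⟨σ, c, key, ?_⟩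
  ext x
  constructor
  · rintro ⟨-, ⟨γ, hγ, rfl⟩, rfl⟩
    have h1 : φ ((1 : G) : G ⧸ Γ) = φ ((γ : G) : G ⧸ Γ) := by
      congr 1
      rw [QuotientGroup.eq]; simpa using hγ
    rw [key γ, ← hcq, QuotientGroup.eq] at h1
    simpa [mul_assoc] using h1
  · intro hx
    refine ⟨c * x * c⁻¹, ⟨σ.symm (c * x * c⁻¹), ?_, σ.apply_symm_apply _⟩, by group⟩
    have h1 : φ ((1 : G) : G ⧸ Γ) = φ ((σ.symm (c * x * c⁻¹) : G) : G ⧸ Γ) := by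
      rw [key (σ.symm (c * x * c⁻¹)), MulEquiv.apply_symm_apply, ← hcq, QuotientGroup.eq]
      simpa [mul_assoc] using hx
    have h2 := QuotientGroup.eq.mp (φ.injective h1)
    simpa [mul_assoc] using h2
end
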